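/- Let X ⊆ ℝ^N be a convex set, g : ℝ^N → ℝ^M, and G : ℝ^N → Matrix (Fin M) (Fin N) ℝ such that for every y ∈ X, g has Jacobian G(y) within X at y. Assume constants 0 < σ_min ≤ σ_max < ∞ and ω > 0 such that for all y, y' ∈ X: σ_min‖v‖ ≤ ‖G(y)·v‖ for all v, ‖G(y)‖ ≤ σ_max, and ‖G(y) − G(y')‖ ≤ ω‖y − y'‖. Let x⋆ ∈ X satisfy G(x⋆)ᵀ·g(x⋆) = 0, set ε_min = ‖g(x⋆)‖, and define d(x) = (G(x)ᵀG(x))⁻¹·G(x)ᵀ·g(x) for x ∈ X. Let the step-size α satisfy max{1 − 3σ_min/σ_max, 0} < α ≤ 1 and assume ω·ε_min < (σ_min²/(√2·α))·(3 − (1−α)·σ_max/σ_min). Set T₁ = α·ω/(2σ_min), T₂ = (1−α)·σ_max/σ_min + √2·α·ω·ε_min/σ_min², assume additionally T₂ < 1, and let κ satisfy 0 < κ < (1 − T₂)²/(4αT₁). Define ρ_min = ((1−T₂) − √((1−T₂)² − 4αT₁κ))/(2T₁) and ρ_max = ((1−T₂) + √((1−T₂)² − 4αT₁κ))/(2T₁).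 Let P : ℝ^N → ℝ^N be nonexpansive with P(x⋆) = x⋆ and P(u) ∈ X for all u. Let (x^k)_{k≥0} be a sequence in X with ‖x⁰ − x⋆‖ < ρ_max and x^{k+1} = P(x^k − α·d̃^k), where (d̃^k) is any sequence of vectors with ‖d̃^k − d(x^k)‖ ≤ κ for all k. Then limsup_{k→∞} ‖x^k − x⋆‖ ≤ ρ_min. -/

import Mathlib

open Matrix

/-- Operator (spectral) 2-norm of a real matrix. -/
noncomputable def matOpNorm {m n : ℕ} (A : Matrix (Fin m) (Fin n) ℝ) : ℝ :=
  ‖LinearMap.toContinuousLinearMap (Matrix.toEuclideanLin A)‖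

/-- Matrix-vector product as a map between Euclidean spaces. -/
noncomputable def matVec {m n : ℕ} (A : Matrix (Fin m) (Fin n) ℝ)
    (v : EuclideanSpace ℝ (Fin n)) : EuclideanSpace ℝ (Fin m) :=
  Matrix.toEuclideanLin A v

section Aux

open Set

lemma matVec_norm_le {m n : ℕ} (A : Matrix (Fin m) (Fin n) ℝ) (v : EuclideanSpace ℝ (Fin n)) :
    ‖matVec A v‖ ≤ matOpNorm A * ‖v‖ := by
  have := (LinearMap.toContinuousLinearMap (Matrix.toEuclideanLin A)).le_opNorm v
  simpa [matVec, matOpNorm] using this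

lemma matVec_mul {m n p : ℕ} (A : Matrix (Fin m) (Fin n) ℝ) (B : Matrix (Fin n) (Fin p) ℝ)
    (v : EuclideanSpace ℝ (Fin p)) : matVec (A * B) v = matVec A (matVec B v) := by
  simp [matVec, Matrix.toEuclideanLin_apply, Matrix.mulVec_mulVec]

lemma matVec_one {n : ℕ} (v : EuclideanSpace ℝ (Fin n)) :
    matVec (1 : Matrix (Fin n) (Fin n) ℝ) v = v := by
  simp [matVec, Matrix.toEuclideanLin_apply]

lemma matVec_sub {m n : ℕ} (A B : Matrix (Fin m) (Fin n) ℝ) (v : EuclideanSpace ℝ (Fin n)) :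
    matVec (A - B) v = matVec A v - matVec B v := by
  simp [matVec, map_sub]

lemma matVec_apply_sub {m n : ℕ} (A : Matrix (Fin m) (Fin n) ℝ) (u v : EuclideanSpace ℝ (Fin n)) :
    matVec A (u - v) = matVec A u - matVec A v := by
  simp [matVec, map_sub]

lemma inner_matVec_transpose {m n : ℕ} (A : Matrix (Fin m) (Fin n) ℝ)
    (u : EuclideanSpace ℝ (Fin m)) (v : EuclideanSpace ℝ (Fin n)) :
    (inner ℝ (matVec Aᵀ u) v : ℝ) = inner ℝ u (matVec A v) := by
  have hT : Aᵀ = Aᴴ := by ext i j; simp [Matrix.conjTranspose_apply]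
  rw [matVec, matVec, hT, Matrix.toEuclideanLin_conjTranspose_eq_adjoint]
  exact LinearMap.adjoint_inner_left _ _ _

lemma inner_ATA {m n : ℕ} (A : Matrix (Fin m) (Fin n) ℝ) (z : EuclideanSpace ℝ (Fin n)) :
    (inner ℝ z (matVec (Aᵀ * A) z) : ℝ) = ‖matVec A z‖ ^ 2 := by
  rw [matVec_mul, real_inner_comm, inner_matVec_transpose, real_inner_self_eq_norm_sq]

lemma ATA_det_isUnit {m n : ℕ} {A : Matrix (Fin m) (Fin n) ℝ} {σ : ℝ} (hσ : 0 < σ)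
    (hlowA : ∀ v, σ * ‖v‖ ≤ ‖matVec A v‖) : IsUnit (Aᵀ * A).det := by
  rw [isUnit_iff_ne_zero]
  intro hdet
  obtain ⟨v, hv0, hv⟩ := (Matrix.exists_mulVec_eq_zero_iff).2 hdet
  set z : EuclideanSpace ℝ (Fin n) := (WithLp.equiv 2 _).symm v with hz
  have hz0 : z ≠ 0 := by simpa [hz] using hv0
  have hmz : matVec (Aᵀ * A) z = 0 := by
    rw [matVec, Matrix.toEuclideanLin_apply]
    simp [hz, hv]
  have h1 : (0:ℝ) = ‖matVec A z‖ ^ 2 := by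
    rw [← inner_ATA A z, hmz, inner_zero_right]
  have ha : ‖matVec A z‖ = 0 := pow_eq_zero_iff two_ne_zero |>.mp h1.symm
  have h2 : σ * ‖z‖ ≤ ‖matVec A z‖ := hlowA z
  have hzpos : 0 < ‖z‖ := norm_pos_iff.2 hz0
  nlinarith

lemma inv_mul_ATA {m n : ℕ} {A : Matrix (Fin m) (Fin n) ℝ} {σ : ℝ} (hσ : 0 < σ)
    (hlowA : ∀ v, σ * ‖v‖ ≤ ‖matVec A v‖) : (Aᵀ * A)⁻¹ * (Aᵀ * A) = 1 :=
  Matrix.nonsing_inv_mul _ (ATA_det_isUnit hσ hlowA)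

lemma mul_inv_ATA {m n : ℕ} {A : Matrix (Fin m) (Fin n) ℝ} {σ : ℝ} (hσ : 0 < σ)
    (hlowA : ∀ v, σ * ‖v‖ ≤ ‖matVec A v‖) : (Aᵀ * A) * (Aᵀ * A)⁻¹ = 1 :=
  Matrix.mul_nonsing_inv _ (ATA_det_isUnit hσ hlowA)

lemma invATA_bound {m n : ℕ} {A : Matrix (Fin m) (Fin n) ℝ} {σ : ℝ} (hσ : 0 < σ)
    (hlowA : ∀ v, σ * ‖v‖ ≤ ‖matVec A v‖) (u : EuclideanSpace ℝ (Fin n)) :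
    σ ^ 2 * ‖matVec (Aᵀ * A)⁻¹ u‖ ≤ ‖u‖ := by
  set w := matVec (Aᵀ * A)⁻¹ u with hw
  have key : matVec (Aᵀ * A) w = u := by
    rw [hw, ← matVec_mul, mul_inv_ATA hσ hlowA, matVec_one]
  have h1 : (inner ℝ w u : ℝ) = ‖matVec A w‖ ^ 2 := by rw [← key, inner_ATA]
  have h2 : σ * ‖w‖ ≤ ‖matVec A w‖ := hlowA w
  have h3 : (inner ℝ w u : ℝ) ≤ ‖w‖ * ‖u‖ := real_inner_le_norm w u
  have hsq : (σ * ‖w‖) * (σ * ‖w‖) ≤ ‖matVec A w‖ * ‖matVec A w‖ :=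
    mul_le_mul h2 h2 (by positivity) (norm_nonneg _)
  rcases eq_or_lt_of_le (norm_nonneg w) with h | h
  · rw [← h]; simpa using norm_nonneg u
  · nlinarith

lemma pinv_bound {m n : ℕ} {A : Matrix (Fin m) (Fin n) ℝ} {σ : ℝ} (hσ : 0 < σ)
    (hlowA : ∀ v, σ * ‖v‖ ≤ ‖matVec A v‖) (v : EuclideanSpace ℝ (Fin m)) :
    σ * ‖matVec ((Aᵀ * A)⁻¹ * Aᵀ) v‖ ≤ ‖v‖ := by
  set w := matVec ((Aᵀ * A)⁻¹ * Aᵀ) v with hw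
  have key : matVec (Aᵀ * A) w = matVec Aᵀ v := by
    rw [hw, ← matVec_mul]
    congr 1
    rw [← Matrix.mul_assoc, mul_inv_ATA hσ hlowA, Matrix.one_mul]
  have h1 : ‖matVec A w‖ ^ 2 = (inner ℝ (matVec A w) v : ℝ) := by
    rw [← inner_ATA A w, key]
    calc (inner ℝ w (matVec Aᵀ v) : ℝ) = inner ℝ (matVec Aᵀ v) w := real_inner_comm _ _
      _ = inner ℝ v (matVec A w) := inner_matVec_transpose _ _ _
      _ = inner ℝ (matVec A w) v := real_inner_comm _ _
  have h2 : (inner ℝ (matVec A w) v : ℝ) ≤ ‖matVec A w‖ * ‖v‖ := real_inner_le_norm _ _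
  have h3 : σ * ‖w‖ ≤ ‖matVec A w‖ := hlowA w
  rcases eq_or_lt_of_le (norm_nonneg (matVec A w)) with h | h
  · have hle : σ * ‖w‖ ≤ 0 := by rw [h]; exact h3
    have h0 : ‖w‖ = 0 := le_antisymm (by nlinarith) (norm_nonneg w)
    rw [h0, mul_zero]; exact norm_nonneg v
  · nlinarith [norm_nonneg v]

lemma transpose_bound {m n : ℕ} (C : Matrix (Fin m) (Fin n) ℝ) (u : EuclideanSpace ℝ (Fin m)) :
    ‖matVec Cᵀ u‖ ≤ matOpNorm C * ‖u‖ := by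
  have h1 : ‖matVec Cᵀ u‖ ^ 2 = (inner ℝ (matVec C (matVec Cᵀ u)) u : ℝ) := by
    rw [← real_inner_self_eq_norm_sq, inner_matVec_transpose, real_inner_comm]
  have h2 : (inner ℝ (matVec C (matVec Cᵀ u)) u : ℝ) ≤ ‖matVec C (matVec Cᵀ u)‖ * ‖u‖ :=
    real_inner_le_norm _ _
  have h3 : ‖matVec C (matVec Cᵀ u)‖ ≤ matOpNorm C * ‖matVec Cᵀ u‖ := matVec_norm_le _ _
  have h4 : 0 ≤ matOpNorm C := norm_nonneg _
  rcases eq_or_lt_of_le (norm_nonneg (matVec Cᵀ u)) with h | h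
  · rw [← h]; positivity
  · nlinarith [norm_nonneg u]

lemma taylor_bound {N M : ℕ} {X : Set (EuclideanSpace ℝ (Fin N))} (hX : Convex ℝ X)
    {g : EuclideanSpace ℝ (Fin N) → EuclideanSpace ℝ (Fin M)}
    {G : EuclideanSpace ℝ (Fin N) → Matrix (Fin M) (Fin N) ℝ}
    (hderiv : ∀ y ∈ X, HasFDerivWithinAt g
      (LinearMap.toContinuousLinearMap (Matrix.toEuclideanLin (G y))) X y)
    {ω : ℝ}
    (hLip : ∀ y ∈ X, ∀ y' ∈ X, matOpNorm (G y - G y') ≤ ω * ‖y - y'‖)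
    {x xstar : EuclideanSpace ℝ (Fin N)} (hx : x ∈ X) (hxs : xstar ∈ X) :
    ‖g x - g xstar - matVec (G x) (x - xstar)‖ ≤ ω / 2 * ‖x - xstar‖ ^ 2 := by
  set e : EuclideanSpace ℝ (Fin N) := x - xstar with he
  set c : ℝ → EuclideanSpace ℝ (Fin N) := fun t => xstar + t • e with hc
  have hc_mem : ∀ t ∈ Icc (0:ℝ) 1, c t ∈ X := by
    intro t ht
    have : c t = (1 - t) • xstar + t • x := by
      simp only [hc, he]
      module
    rw [this]
    exact hX hxs hx (by linarith [ht.2]) (by linarith [ht.1]) (by ring)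
  have hmaps : MapsTo c (Icc (0:ℝ) 1) X := fun t ht => hc_mem t ht
  have hcC : Continuous c := by
    simp only [hc]; fun_prop
  set A : Matrix (Fin M) (Fin N) ℝ := G x with hA
  set f : ℝ → EuclideanSpace ℝ (Fin M) :=
    fun t => g (c t) - g xstar - t • matVec A e with hf
  set f' : ℝ → EuclideanSpace ℝ (Fin M) := fun t => matVec (G (c t) - A) e with hf'
  have hcd : ∀ t : ℝ, HasDerivAt c e t := by
    intro t
    have h1 : HasDerivAt (fun s : ℝ => s • e) ((1:ℝ) • e) t :=
      (hasDerivAt_id t).smul_const e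
    simpa [hc] using h1.const_add xstar
  have hfderiv : ∀ t ∈ Ico (0:ℝ) 1, HasDerivWithinAt f (f' t) (Ici t) t := by
    intro t ht
    have hg : HasFDerivWithinAt g
        (LinearMap.toContinuousLinearMap (Matrix.toEuclideanLin (G (c t)))) X (c t) :=
      hderiv (c t) (hc_mem t ⟨ht.1, ht.2.le⟩)
    have hcomp : HasDerivWithinAt (fun s => g (c s)) (matVec (G (c t)) e) (Icc 0 1) t := by
      have := hg.comp_hasDerivWithinAt t ((hcd t).hasDerivWithinAt) hmaps
      exact this
    have hlin : HasDerivWithinAt (fun s : ℝ => s • matVec A e) (matVec A e) (Icc 0 1) t := by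
      have h1 : HasDerivAt (fun s : ℝ => s • matVec A e) ((1:ℝ) • matVec A e) t :=
        (hasDerivAt_id t).smul_const _
      simpa using h1.hasDerivWithinAt
    have htot : HasDerivWithinAt f (f' t) (Icc 0 1) t := by
      have := (hcomp.sub_const (g xstar)).sub hlin
      have e1 : f' t = matVec (G (c t)) e - matVec A e := by simp only [hf', matVec_sub]
      rw [e1]; exact this
    have hmem : Icc (0:ℝ) 1 ∈ nhdsWithin t (Ici t) := by
      rw [mem_nhdsWithin]
      exact ⟨Iio 1, isOpen_Iio, ht.2, fun y hy => ⟨le_trans ht.1 hy.2, le_of_lt hy.1⟩⟩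
    exact htot.mono_of_mem_nhdsWithin hmem
  set B : ℝ → ℝ := fun t => ω * ‖e‖ ^ 2 * (t - t ^ 2 / 2) with hB
  set B' : ℝ → ℝ := fun t => ω * ‖e‖ ^ 2 * (1 - t) with hB'
  have hBd : ∀ s : ℝ, HasDerivAt B (B' s) s := by
    intro s
    have h1 : HasDerivAt (fun t : ℝ => t - t ^ 2 / 2) (1 - 2 * s ^ 1 / 2) s :=
      (hasDerivAt_id s).sub ((hasDerivAt_pow 2 s).div_const 2)
    have := h1.const_mul (ω * ‖e‖ ^ 2)
    have hv : B' s = ω * ‖e‖ ^ 2 * (1 - 2 * s ^ 1 / 2) := by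
      show ω * ‖e‖ ^ 2 * (1 - s) = _
      ring
    rw [hv]; exact this
  have hbound : ∀ t ∈ Ico (0:ℝ) 1, ‖f' t‖ ≤ B' t := by
    intro t ht
    have h1 : ‖f' t‖ ≤ matOpNorm (G (c t) - A) * ‖e‖ := matVec_norm_le _ _
    have h2 : matOpNorm (G (c t) - A) ≤ ω * ‖c t - x‖ :=
      hLip (c t) (hc_mem t ⟨ht.1, ht.2.le⟩) x hx
    have h3 : c t - x = (t - 1) • e := by
      simp only [hc, he]; module
    have h4 : ‖c t - x‖ = (1 - t) * ‖e‖ := by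
      rw [h3, norm_smul]
      simp [abs_of_nonpos (by linarith [ht.2] : t - 1 ≤ 0)]
    have h5 : matOpNorm (G (c t) - A) * ‖e‖ ≤ ω * ((1 - t) * ‖e‖) * ‖e‖ := by
      apply mul_le_mul_of_nonneg_right _ (norm_nonneg e)
      rw [← h4]; exact h2
    calc ‖f' t‖ ≤ matOpNorm (G (c t) - A) * ‖e‖ := h1
      _ ≤ ω * ((1 - t) * ‖e‖) * ‖e‖ := h5
      _ = B' t := by simp only [hB']; ring
  have hcont : ContinuousOn f (Icc (0:ℝ) 1) := by
    have hgc : ContinuousOn (fun t => g (c t)) (Icc (0:ℝ) 1) := by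
      intro t ht
      exact ((hderiv (c t) (hc_mem t ht)).continuousWithinAt).comp
        hcC.continuousWithinAt hmaps
    exact (hgc.sub continuousOn_const).sub (by fun_prop)
  have ha : ‖f 0‖ ≤ B 0 := by
    simp [hf, hB, hc]
  have key := image_norm_le_of_norm_deriv_right_le_deriv_boundary hcont hfderiv ha hBd hbound
    (right_mem_Icc.2 zero_le_one)
  have hc1 : c 1 = x := by simp [hc, he]
  have hf1 : f 1 = g x - g xstar - matVec A e := by simp [hf, hc1]
  have hB1 : B 1 = ω / 2 * ‖e‖ ^ 2 := by simp only [hB]; ring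
  rw [hf1, hB1] at key
  exact key

end Aux

set_option maxHeartbeats 1000000 in
lemma gn_key_step {N M : ℕ} {X : Set (EuclideanSpace ℝ (Fin N))} (hX : Convex ℝ X)
    {g : EuclideanSpace ℝ (Fin N) → EuclideanSpace ℝ (Fin M)}
    {G : EuclideanSpace ℝ (Fin N) → Matrix (Fin M) (Fin N) ℝ}
    (hderiv : ∀ y ∈ X, HasFDerivWithinAt g
      (LinearMap.toContinuousLinearMap (Matrix.toEuclideanLin (G y))) X y)
    {σmin σmax ω : ℝ} (hσ0 : 0 < σmin) (hσσ : σmin ≤ σmax) (hω : 0 < ω)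
    (hlow : ∀ y ∈ X, ∀ v : EuclideanSpace ℝ (Fin N), σmin * ‖v‖ ≤ ‖matVec (G y) v‖)
    (hLip : ∀ y ∈ X, ∀ y' ∈ X, matOpNorm (G y - G y') ≤ ω * ‖y - y'‖)
    {xstar : EuclideanSpace ℝ (Fin N)} (hxstar : xstar ∈ X)
    (hfix : matVec (G xstar)ᵀ (g xstar) = 0)
    {εmin : ℝ} (hεmin : εmin = ‖g xstar‖)
    {d : EuclideanSpace ℝ (Fin N) → EuclideanSpace ℝ (Fin N)}
    (hd : ∀ x, d x = matVec (((G x)ᵀ * G x)⁻¹ * (G x)ᵀ) (g x))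
    {α : ℝ} (hα1 : α ≤ 1) (hα0' : 0 < α)
    {T₁ T₂ : ℝ}
    (hT₁ : T₁ = α * ω / (2 * σmin))
    (hT₂ : T₂ = (1 - α) * σmax / σmin + Real.sqrt 2 * α * ω * εmin / σmin ^ 2) :
    ∀ y ∈ X, ‖y - α • d y - xstar‖ ≤ T₁ * ‖y - xstar‖ ^ 2 + T₂ * ‖y - xstar‖ := by
  have h1α : 0 ≤ 1 - α := by linarith
  have hε0 : 0 ≤ εmin := hεmin ▸ norm_nonneg _
  have hsqrt2 : (1:ℝ) ≤ Real.sqrt 2 := by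
    rw [show (1:ℝ) = Real.sqrt 1 by simp]
    exact Real.sqrt_le_sqrt (by norm_num)
  intro y hy
  set e : EuclideanSpace ℝ (Fin N) := y - xstar with he
  set A : Matrix (Fin M) (Fin N) ℝ := G y with hA
  have hlowA : ∀ v, σmin * ‖v‖ ≤ ‖matVec A v‖ := hlow y hy
  -- e - d y
  set w₁ : EuclideanSpace ℝ (Fin M) := matVec A e - (g y - g xstar) with hw₁
  have hid : matVec ((Aᵀ * A)⁻¹ * Aᵀ) (matVec A e) = e := by
    rw [← matVec_mul]
    rw [show (Aᵀ * A)⁻¹ * Aᵀ * A = (Aᵀ * A)⁻¹ * (Aᵀ * A) from Matrix.mul_assoc _ _ _,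
      inv_mul_ATA hσ0 hlowA, matVec_one]
  have hde : e - d y = matVec ((Aᵀ * A)⁻¹ * Aᵀ) w₁ -
      matVec ((Aᵀ * A)⁻¹ * Aᵀ) (g xstar) := by
    have h1 : w₁ - g xstar = matVec A e - g y := by rw [hw₁]; abel
    rw [hd y, show ((G y)ᵀ * G y)⁻¹ * (G y)ᵀ = (Aᵀ * A)⁻¹ * Aᵀ from by rw [hA],
      ← matVec_apply_sub, h1, matVec_apply_sub, hid]
  -- Taylor term
  have htay : ‖w₁‖ ≤ ω / 2 * ‖e‖ ^ 2 := by
    have := taylor_bound hX hderiv hLip hy hxstar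
    have heq : ‖w₁‖ = ‖g y - g xstar - matVec (G y) (y - xstar)‖ := by
      rw [hw₁, ← norm_neg]
      congr 1
      simp only [hA, he]
      abel
    rw [heq]; exact this
  have hterm1 : ‖matVec ((Aᵀ * A)⁻¹ * Aᵀ) w₁‖ ≤ ω / (2 * σmin) * ‖e‖ ^ 2 := by
    have h1 := pinv_bound hσ0 hlowA w₁
    rw [div_mul_eq_mul_div, le_div_iff₀ (by positivity : (0:ℝ) < 2 * σmin)]
    calc ‖matVec ((Aᵀ * A)⁻¹ * Aᵀ) w₁‖ * (2 * σmin)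
        = 2 * (σmin * ‖matVec ((Aᵀ * A)⁻¹ * Aᵀ) w₁‖) := by ring
      _ ≤ 2 * ‖w₁‖ := by linarith
      _ ≤ ω * ‖e‖ ^ 2 := by linarith
  -- residual term
  have hsplit : matVec Aᵀ (g xstar) = matVec (A - G xstar)ᵀ (g xstar) := by
    rw [Matrix.transpose_sub, matVec_sub, hfix, sub_zero]
  have hterm2 : ‖matVec ((Aᵀ * A)⁻¹ * Aᵀ) (g xstar)‖ ≤
      ω * εmin / σmin ^ 2 * ‖e‖ := by
    have h1 : matVec ((Aᵀ * A)⁻¹ * Aᵀ) (g xstar) =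
        matVec (Aᵀ * A)⁻¹ (matVec (A - G xstar)ᵀ (g xstar)) := by
      rw [matVec_mul, hsplit]
    have h2 := invATA_bound hσ0 hlowA (matVec (A - G xstar)ᵀ (g xstar))
    have h3 : ‖matVec (A - G xstar)ᵀ (g xstar)‖ ≤ (ω * ‖e‖) * εmin := by
      calc ‖matVec (A - G xstar)ᵀ (g xstar)‖
          ≤ matOpNorm (A - G xstar) * ‖g xstar‖ := transpose_bound _ _
        _ ≤ (ω * ‖y - xstar‖) * ‖g xstar‖ := by
            apply mul_le_mul_of_nonneg_right (hLip y hy xstar hxstar) (norm_nonneg _)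
        _ = (ω * ‖e‖) * εmin := by rw [hεmin, he]
    rw [h1, div_mul_eq_mul_div, le_div_iff₀ (by positivity : (0:ℝ) < σmin ^ 2)]
    calc ‖matVec (Aᵀ * A)⁻¹ (matVec (A - G xstar)ᵀ (g xstar))‖ * σmin ^ 2
        = σmin ^ 2 * ‖matVec (Aᵀ * A)⁻¹ (matVec (A - G xstar)ᵀ (g xstar))‖ := by ring
      _ ≤ ‖matVec (A - G xstar)ᵀ (g xstar)‖ := h2
      _ ≤ (ω * ‖e‖) * εmin := h3
      _ = ω * εmin * ‖e‖ := by ring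
  have hed : ‖e - d y‖ ≤ ω / (2 * σmin) * ‖e‖ ^ 2 + ω * εmin / σmin ^ 2 * ‖e‖ := by
    rw [hde]
    calc ‖matVec ((Aᵀ * A)⁻¹ * Aᵀ) w₁ - matVec ((Aᵀ * A)⁻¹ * Aᵀ) (g xstar)‖
        ≤ ‖matVec ((Aᵀ * A)⁻¹ * Aᵀ) w₁‖ + ‖matVec ((Aᵀ * A)⁻¹ * Aᵀ) (g xstar)‖ :=
          norm_sub_le _ _
      _ ≤ ω / (2 * σmin) * ‖e‖ ^ 2 + ω * εmin / σmin ^ 2 * ‖e‖ := by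
          exact add_le_add hterm1 hterm2
  -- combine
  have hcomb : y - α • d y - xstar = (1 - α) • e + α • (e - d y) := by
    simp only [he]
    module
  have hnorm : ‖y - α • d y - xstar‖ ≤ (1 - α) * ‖e‖ + α * ‖e - d y‖ := by
    rw [hcomb]
    calc ‖(1 - α) • e + α • (e - d y)‖ ≤ ‖(1 - α) • e‖ + ‖α • (e - d y)‖ :=
        norm_add_le _ _
      _ = (1 - α) * ‖e‖ + α * ‖e - d y‖ := by
          rw [norm_smul, norm_smul, Real.norm_eq_abs, Real.norm_eq_abs,
            abs_of_nonneg h1α, abs_of_nonneg hα0'.le]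
  have hfrac : (1:ℝ) ≤ σmax / σmin := (one_le_div hσ0).2 hσσ
  have key2 : (1 - α) * ‖e‖ ≤ (1 - α) * σmax / σmin * ‖e‖ := by
    apply mul_le_mul_of_nonneg_right _ (norm_nonneg e)
    rw [mul_div_assoc]
    exact le_mul_of_one_le_right h1α hfrac
  have key3 : α * (ω * εmin / σmin ^ 2 * ‖e‖) ≤
      Real.sqrt 2 * α * ω * εmin / σmin ^ 2 * ‖e‖ := by
    have hnum : α * ω * εmin ≤ Real.sqrt 2 * α * ω * εmin := by
      have := mul_le_mul_of_nonneg_right hsqrt2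
        (mul_nonneg (mul_nonneg hα0'.le hω.le) hε0)
      linarith [this]
    have hbase : α * (ω * εmin / σmin ^ 2) ≤ Real.sqrt 2 * α * ω * εmin / σmin ^ 2 := by
      rw [show α * (ω * εmin / σmin ^ 2) = α * ω * εmin / σmin ^ 2 from by ring]
      exact (div_le_div_iff_of_pos_right (by positivity)).2 hnum
    calc α * (ω * εmin / σmin ^ 2 * ‖e‖) = α * (ω * εmin / σmin ^ 2) * ‖e‖ := by ring
      _ ≤ Real.sqrt 2 * α * ω * εmin / σmin ^ 2 * ‖e‖ :=
          mul_le_mul_of_nonneg_right hbase (norm_nonneg e)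
  calc ‖y - α • d y - xstar‖ ≤ (1 - α) * ‖e‖ + α * ‖e - d y‖ := hnorm
    _ ≤ (1 - α) * ‖e‖ + α * (ω / (2 * σmin) * ‖e‖ ^ 2 + ω * εmin / σmin ^ 2 * ‖e‖) := by
        have := mul_le_mul_of_nonneg_left hed hα0'.le
        linarith
    _ ≤ T₁ * ‖e‖ ^ 2 + T₂ * ‖e‖ := by
        rw [hT₁, hT₂]
        have e2 : ((1 - α) * σmax / σmin + Real.sqrt 2 * α * ω * εmin / σmin ^ 2) * ‖e‖
            = (1 - α) * σmax / σmin * ‖e‖ + Real.sqrt 2 * α * ω * εmin / σmin ^ 2 * ‖e‖ := by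
          ring
        rw [e2, show α * (ω / (2 * σmin) * ‖e‖ ^ 2 + ω * εmin / σmin ^ 2 * ‖e‖)
            = α * ω / (2 * σmin) * ‖e‖ ^ 2 + α * (ω * εmin / σmin ^ 2 * ‖e‖) from by ring]
        linarith [key2, key3]


set_option maxHeartbeats 1000000 in
/-- Theorem 1 of the paper: convergence of the perturbed
projected Gauss–Newton recursion with bounded perturbation κ to a
ρ_min-neighborhood of the fixed point, for initializations in the
ρ_max-neighborhood. -/
theorem gauss_newton_bounded_perturbation_convergence {N M : ℕ}
    (X : Set (EuclideanSpace ℝ (Fin N))) (hX : Convex ℝ X)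
    (g : EuclideanSpace ℝ (Fin N) → EuclideanSpace ℝ (Fin M))
    (G : EuclideanSpace ℝ (Fin N) → Matrix (Fin M) (Fin N) ℝ)
    (hderiv : ∀ y ∈ X, HasFDerivWithinAt g
      (LinearMap.toContinuousLinearMap (Matrix.toEuclideanLin (G y))) X y)
    (σmin σmax ω : ℝ) (hσ0 : 0 < σmin) (hσσ : σmin ≤ σmax) (hω : 0 < ω)
    (hlow : ∀ y ∈ X, ∀ v : EuclideanSpace ℝ (Fin N),
      σmin * ‖v‖ ≤ ‖matVec (G y) v‖)
    (hup : ∀ y ∈ X, matOpNorm (G y) ≤ σmax)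
    (hLip : ∀ y ∈ X, ∀ y' ∈ X, matOpNorm (G y - G y') ≤ ω * ‖y - y'‖)
    (xstar : EuclideanSpace ℝ (Fin N)) (hxstar : xstar ∈ X)
    (hfix : matVec (G xstar)ᵀ (g xstar) = 0)
    (εmin : ℝ) (hεmin : εmin = ‖g xstar‖)
    (d : EuclideanSpace ℝ (Fin N) → EuclideanSpace ℝ (Fin N))
    (hd : ∀ x, d x = matVec (((G x)ᵀ * G x)⁻¹ * (G x)ᵀ) (g x))
    (α : ℝ) (hα1 : α ≤ 1) (hα0 : max (1 - 3 * σmin / σmax) 0 < α)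
    (hωε : ω * εmin < σmin ^ 2 / (Real.sqrt 2 * α) *
      (3 - (1 - α) * σmax / σmin))
    (T₁ T₂ : ℝ)
    (hT₁ : T₁ = α * ω / (2 * σmin))
    (hT₂ : T₂ = (1 - α) * σmax / σmin + Real.sqrt 2 * α * ω * εmin / σmin ^ 2)
    (hT₂1 : T₂ < 1)
    (κ : ℝ) (hκ0 : 0 < κ) (hκ : κ < (1 - T₂) ^ 2 / (4 * α * T₁))
    (ρmin ρmax : ℝ)
    (hρmin : ρmin =
      ((1 - T₂) - Real.sqrt ((1 - T₂) ^ 2 - 4 * α * T₁ * κ)) / (2 * T₁))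
    (hρmax : ρmax =
      ((1 - T₂) + Real.sqrt ((1 - T₂) ^ 2 - 4 * α * T₁ * κ)) / (2 * T₁))
    (P : EuclideanSpace ℝ (Fin N) → EuclideanSpace ℝ (Fin N))
    (hPne : ∀ u v, ‖P u - P v‖ ≤ ‖u - v‖)
    (hPfix : P xstar = xstar)
    (hPX : ∀ u, P u ∈ X)
    (x : ℕ → EuclideanSpace ℝ (Fin N))
    (hxX : ∀ k, x k ∈ X)
    (h0 : ‖x 0 - xstar‖ < ρmax)
    (dtil : ℕ → EuclideanSpace ℝ (Fin N))
    (hrec : ∀ k, x (k + 1) = P (x k - α • dtil k))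
    (hdtil : ∀ k, ‖dtil k - d (x k)‖ ≤ κ) :
    Filter.limsup (fun k => ‖x k - xstar‖) Filter.atTop ≤ ρmin := by
  have hα0' : 0 < α := lt_of_le_of_lt (le_max_right _ 0) hα0
  have h1α : 0 ≤ 1 - α := by linarith
  have hε0 : 0 ≤ εmin := hεmin ▸ norm_nonneg _
  have hσmax0 : 0 < σmax := lt_of_lt_of_le hσ0 hσσ
  have hsqrt2 : (1:ℝ) ≤ Real.sqrt 2 := by
    rw [show (1:ℝ) = Real.sqrt 1 by simp]
    exact Real.sqrt_le_sqrt (by norm_num)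
  have hT₁0 : 0 < T₁ := by rw [hT₁]; positivity
  have hkey := gn_key_step hX hderiv hσ0 hσσ hω hlow hLip hxstar hfix hεmin hd hα1 hα0' hT₁ hT₂
  have hT₂0 : 0 ≤ T₂ := by
    rw [hT₂]
    have h1 : 0 ≤ (1 - α) * σmax / σmin := by positivity
    have h2 : 0 ≤ Real.sqrt 2 * α * ω * εmin / σmin ^ 2 := by positivity
    linarith
  -- one-step recursion bound
  have hstep : ∀ k, ‖x (k + 1) - xstar‖ ≤
      T₁ * ‖x k - xstar‖ ^ 2 + T₂ * ‖x k - xstar‖ + α * κ := by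
    intro k
    have h1 : ‖x (k + 1) - xstar‖ ≤ ‖(x k - α • dtil k) - xstar‖ := by
      rw [hrec k]
      calc ‖P (x k - α • dtil k) - xstar‖ = ‖P (x k - α • dtil k) - P xstar‖ := by
            rw [hPfix]
        _ ≤ ‖(x k - α • dtil k) - xstar‖ := hPne _ _
    have h2 : (x k - α • dtil k) - xstar =
        (x k - α • d (x k) - xstar) + α • (d (x k) - dtil k) := by
      module
    have h3 : ‖(x k - α • dtil k) - xstar‖ ≤
        ‖x k - α • d (x k) - xstar‖ + α * κ := by
      rw [h2]
      refine le_trans (norm_add_le _ _) ?_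
      have h4 : ‖α • (d (x k) - dtil k)‖ = α * ‖d (x k) - dtil k‖ := by
        rw [norm_smul, Real.norm_eq_abs, abs_of_nonneg hα0'.le]
      have h5 : ‖d (x k) - dtil k‖ ≤ κ := by
        rw [norm_sub_rev]; exact hdtil k
      have h6 : α * ‖d (x k) - dtil k‖ ≤ α * κ :=
        mul_le_mul_of_nonneg_left h5 hα0'.le
      linarith [h4 ▸ h6]
    have h7 := hkey (x k) (hxX k)
    calc ‖x (k + 1) - xstar‖ ≤ ‖(x k - α • dtil k) - xstar‖ := h1
      _ ≤ ‖x k - α • d (x k) - xstar‖ + α * κ := h3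
      _ ≤ T₁ * ‖x k - xstar‖ ^ 2 + T₂ * ‖x k - xstar‖ + α * κ := by linarith
  -- quadratic fixed point analysis
  have hD : 0 < (1 - T₂) ^ 2 - 4 * α * T₁ * κ := by
    have h1 : 0 < 4 * α * T₁ := by positivity
    have h2 : κ * (4 * α * T₁) < (1 - T₂) ^ 2 := (lt_div_iff₀ h1).1 hκ
    nlinarith
  set s : ℝ := Real.sqrt ((1 - T₂) ^ 2 - 4 * α * T₁ * κ) with hs
  have hs2 : s ^ 2 = (1 - T₂) ^ 2 - 4 * α * T₁ * κ := Real.sq_sqrt hD.le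
  have hs0 : 0 < s := Real.sqrt_pos.2 hD
  have hslt : s < 1 - T₂ := by
    have h1 : (1 - T₂) ^ 2 - 4 * α * T₁ * κ < (1 - T₂) ^ 2 := by
      have : 0 < 4 * α * T₁ * κ := by positivity
      linarith
    calc s < Real.sqrt ((1 - T₂) ^ 2) := Real.sqrt_lt_sqrt hD.le h1
      _ = 1 - T₂ := Real.sqrt_sq (by linarith)
  have hρsum : ρmin + ρmax = (1 - T₂) / T₁ := by
    rw [hρmin, hρmax]
    field_simp
    ring
  have hρprod : ρmin * ρmax = α * κ / T₁ := by
    rw [hρmin, hρmax, div_mul_div_comm]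
    rw [show (1 - T₂ - s) * (1 - T₂ + s) = (1 - T₂) ^ 2 - s ^ 2 by ring, hs2]
    rw [show (1 - T₂) ^ 2 - ((1 - T₂) ^ 2 - 4 * α * T₁ * κ) = 4 * α * T₁ * κ by ring]
    field_simp
    ring
  have hQ : ∀ r : ℝ, T₁ * r ^ 2 - (1 - T₂) * r + α * κ = T₁ * (r - ρmin) * (r - ρmax) := by
    intro r
    have h1 : (1 - T₂) = T₁ * (ρmin + ρmax) := by
      rw [hρsum, mul_div_cancel₀ _ hT₁0.ne']
    have h2 : α * κ = T₁ * (ρmin * ρmax) := by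
      rw [hρprod, mul_div_cancel₀ _ hT₁0.ne']
    rw [h1, h2]; ring
  have hρmin_pos : 0 < ρmin := by
    rw [hρmin]
    apply div_pos (by linarith) (by linarith)
  have hρρ : ρmin < ρmax := by
    rw [hρmin, hρmax]
    exact div_lt_div_of_pos_right (by linarith) (by linarith)
  have hcontract : ∀ r, ρmin ≤ r → r ≤ ρmax → T₁ * r ^ 2 + T₂ * r + α * κ ≤ r := by
    intro r h1 h2
    have hm : (r - ρmin) * (r - ρmax) ≤ 0 :=
      mul_nonpos_of_nonneg_of_nonpos (by linarith) (by linarith)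
    nlinarith [hQ r, mul_nonneg hT₁0.le (neg_nonneg.2 hm)]
  have hFmono : ∀ a b : ℝ, 0 ≤ a → a ≤ b →
      T₁ * a ^ 2 + T₂ * a + α * κ ≤ T₁ * b ^ 2 + T₂ * b + α * κ := by
    intro a b ha hab
    have k1 : T₁ * a ^ 2 ≤ T₁ * b ^ 2 :=
      mul_le_mul_of_nonneg_left (pow_le_pow_left₀ ha hab 2) hT₁0.le
    have k2 : T₂ * a ≤ T₂ * b := mul_le_mul_of_nonneg_left hab hT₂0
    linarith
  have hFρmin : T₁ * ρmin ^ 2 + T₂ * ρmin + α * κ = ρmin := by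
    have := hQ ρmin
    simp only [sub_self, mul_zero, zero_mul] at this
    linarith
  -- the majorizing sequence
  set F : ℝ → ℝ := fun r => T₁ * r ^ 2 + T₂ * r + α * κ with hF
  set q : ℕ → ℝ := fun k => F^[k] (max ‖x 0 - xstar‖ ρmin) with hq
  have hq0 : q 0 = max ‖x 0 - xstar‖ ρmin := rfl
  have hq_succ : ∀ k, q (k + 1) = F (q k) := by
    intro k
    simp only [hq, Function.iterate_succ_apply']
  have hq0a : ρmin ≤ q 0 := le_max_right _ _
  have hq0b : q 0 < ρmax := by
    rw [hq0]
    exact max_lt h0 hρρ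
  have hqinv : ∀ k, ρmin ≤ q k ∧ q k < ρmax := by
    intro k
    induction k with
    | zero => exact ⟨hq0a, hq0b⟩
    | succ k ih =>
      rw [hq_succ k]
      constructor
      · calc ρmin = F ρmin := hFρmin.symm
          _ ≤ F (q k) := hFmono _ _ hρmin_pos.le ih.1
      · calc F (q k) ≤ q k := hcontract _ ih.1 ih.2.le
          _ < ρmax := ih.2
  have hrq : ∀ k, ‖x k - xstar‖ ≤ q k := by
    intro k
    induction k with
    | zero => exact le_max_left _ _
    | succ k ih =>
      rw [hq_succ k]
      calc ‖x (k + 1) - xstar‖ ≤ T₁ * ‖x k - xstar‖ ^ 2 + T₂ * ‖x k - xstar‖ + α * κ :=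
          hstep k
        _ ≤ F (q k) := hFmono _ _ (norm_nonneg _) ih
  have hq_anti : Antitone q := by
    apply antitone_nat_of_succ_le
    intro k
    rw [hq_succ k]
    exact hcontract _ (hqinv k).1 (hqinv k).2.le
  have hq_bdd : BddBelow (Set.range q) := by
    refine ⟨ρmin, ?_⟩
    rintro _ ⟨k, rfl⟩
    exact (hqinv k).1
  have htend : Filter.Tendsto q Filter.atTop (nhds (⨅ k, q k)) :=
    tendsto_atTop_ciInf hq_anti hq_bdd
  set ℓ : ℝ := ⨅ k, q k with hℓ
  have hℓ1 : ρmin ≤ ℓ := le_ciInf fun k => (hqinv k).1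
  have hℓ2 : ℓ < ρmax := lt_of_le_of_lt (ciInf_le hq_bdd 0) hq0b
  have hFcont : Continuous F := by
    simp only [hF]
    fun_prop
  have hℓfix : F ℓ = ℓ := by
    have h1 : Filter.Tendsto (fun k => q (k + 1)) Filter.atTop (nhds ℓ) :=
      htend.comp (Filter.tendsto_add_atTop_nat 1)
    have h2 : Filter.Tendsto (fun k => F (q k)) Filter.atTop (nhds (F ℓ)) :=
      (hFcont.tendsto ℓ).comp htend
    have h3 : (fun k => q (k + 1)) = fun k => F (q k) := by
      funext k; exact hq_succ k
    rw [h3] at h1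
    exact tendsto_nhds_unique h2 h1
  have hℓρ : ℓ = ρmin := by
    have h1 : T₁ * (ℓ - ρmin) * (ℓ - ρmax) = 0 := by
      have := hQ ℓ
      have h2 : T₁ * ℓ ^ 2 + T₂ * ℓ + α * κ = ℓ := hℓfix
      nlinarith
    rcases mul_eq_zero.1 h1 with h | h
    · rcases mul_eq_zero.1 h with h' | h'
      · exact absurd h' hT₁0.ne'
      · linarith [sub_eq_zero.1 h']
    · exact absurd (sub_eq_zero.1 h) hℓ2.ne
  have hlimq : Filter.limsup q Filter.atTop = ρmin := by
    rw [← hℓρ]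
    exact (hℓρ ▸ hℓρ.symm ▸ htend).limsup_eq
  rw [← hlimq]
  apply Filter.limsup_le_limsup
  · exact Filter.Eventually.of_forall hrq
  · exact Filter.isCoboundedUnder_le_of_le _ fun k => norm_nonneg _
  · exact Filter.isBoundedUnder_of ⟨q 0, fun k => hq_anti (Nat.zero_le k)⟩
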